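/- Assume condition (C) holds, that L_1 is an irreducible L_0-module, and that [L_{−q}, L_1] ≠ 0. Then for every i > 0, the annihilator of L_{−q} in L_i is zero: the only x ∈ L_i with [x, L_{−q}] = 0 is x = 0. (Lemma 2.16.) -/

import Mathlib

/- Graded Lie algebra setting: `F` a field of characteristic 3, `A` a
finite-dimensional Lie algebra over `F`, with a `ℤ`-grading `L : ℤ → Submodule F A`. -/

namespace GradedLie

variable {F A : Type*} [Field F] [CharP F 3] [LieRing A] [LieAlgebra F A]

/-- The linear span of all brackets `⁅u, v⁆` with `u ∈ U`, `v ∈ V`. -/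
def bSpan (U V : Submodule F A) : Submodule F A :=
  Submodule.span F {z | ∃ u ∈ U, ∃ v ∈ V, z = ⁅u, v⁆}

/-- `M` is an irreducible `L0`-module under the adjoint action:
`M ≠ 0` and the only `L0`-submodules of `M` are `0` and `M`. -/
def IsIrred (L0 M : Submodule F A) : Prop :=
  M ≠ ⊥ ∧ ∀ V ≤ M, bSpan L0 V ≤ V → V = ⊥ ∨ V = M

/-- Lemma 2.16: under (C), irreducibility of `L 1`, and `[L (-q), L 1] ≠ 0`,
the annihilator of `L (-q)` in each `L i`, `i > 0`, is zero. -/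
theorem lemma_2_16
    [FiniteDimensional F A]
    (L : ℤ → Submodule F A)
    (hdecomp : DirectSum.IsInternal L)
    (hgrade : ∀ i j : ℤ, ∀ x ∈ L i, ∀ y ∈ L j, ⁅x, y⁆ ∈ L (i + j))
    (q r : ℤ) (hq : 1 ≤ q) (hr : 1 ≤ r)
    (hbound : ∀ i : ℤ, i < -q ∨ r < i → L i = ⊥)
    (hbot : L (-q) ≠ ⊥)
    (hC : ∀ j : ℤ, 0 ≤ j → ∀ x ∈ L j, (∀ y ∈ L (-1), ⁅x, y⁆ = 0) → x = 0)
    (hL1irr : IsIrred (L 0) (L 1))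
    (hne : bSpan (L (-q)) (L 1) ≠ ⊥) :
    ∀ i : ℤ, 0 < i → ∀ x ∈ L i, (∀ y ∈ L (-q), ⁅x, y⁆ = 0) → x = 0 := by
  -- Step 1: the case i = 1, via irreducibility of L 1.
  have key1 : ∀ x ∈ L 1, (∀ y ∈ L (-q), ⁅x, y⁆ = 0) → x = 0 := by
    set V : Submodule F A :=
      { carrier := {x | x ∈ L 1 ∧ ∀ y ∈ L (-q), ⁅x, y⁆ = 0}
        add_mem' := by
          rintro a b ⟨ha1, ha2⟩ ⟨hb1, hb2⟩
          exact ⟨(L 1).add_mem ha1 hb1, fun y hy => by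
            rw [add_lie, ha2 y hy, hb2 y hy, add_zero]⟩
        zero_mem' := ⟨(L 1).zero_mem, fun y hy => zero_lie y⟩
        smul_mem' := by
          rintro c a ⟨ha1, ha2⟩
          exact ⟨(L 1).smul_mem c ha1, fun y hy => by
            rw [smul_lie, ha2 y hy, smul_zero]⟩ } with hVdef
    have hVle : V ≤ L 1 := fun x hx => hx.1
    have hinv : bSpan (L 0) V ≤ V := by
      rw [bSpan, Submodule.span_le]
      rintro z ⟨u, hu, v, hv, rfl⟩
      obtain ⟨hv1, hv2⟩ := hv
      refine ⟨by simpa using hgrade 0 1 u hu v hv1, fun y hy => ?_⟩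
      have h1 : ⁅u, y⁆ ∈ L (-q) := by simpa using hgrade 0 (-q) u hu y hy
      rw [lie_lie, hv2 y hy, hv2 _ h1, lie_zero, sub_zero]
    rcases hL1irr.2 V hVle hinv with h | h
    · intro x hx hann
      have hxV : x ∈ V := ⟨hx, hann⟩
      rw [h] at hxV
      simpa using hxV
    · exfalso
      apply hne
      rw [bSpan, Submodule.span_eq_bot]
      rintro z ⟨u, hu, v, hv, rfl⟩
      have hvV : v ∈ V := h ▸ hv
      have : ⁅v, u⁆ = 0 := hvV.2 u hu
      rw [← lie_skew, this, neg_zero]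
  -- Step 2: induction upwards from 1 using transitivity (C).
  have main : ∀ i : ℤ, 1 ≤ i → ∀ x ∈ L i, (∀ y ∈ L (-q), ⁅x, y⁆ = 0) → x = 0 := by
    intro i hi
    refine Int.le_induction (motive := fun i _ => ∀ x ∈ L i, (∀ y ∈ L (-q), ⁅x, y⁆ = 0) → x = 0) key1 (fun n hn IH => ?_) i hi
    intro x hx hann
    apply hC (n + 1) (by omega) x hx
    intro y hy
    have hxyL : ⁅x, y⁆ ∈ L n := by
      have := hgrade (n + 1) (-1) x hx y hy
      simpa using this
    apply IH ⁅x, y⁆ hxyL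
    intro z hz
    have h0 : ⁅y, z⁆ = 0 := by
      have hm := hgrade (-1) (-q) y hy z hz
      have hb : L (-1 + -q) = ⊥ := hbound _ (Or.inl (by omega))
      rw [hb] at hm
      simpa using hm
    rw [lie_lie, hann z hz, h0, lie_zero, lie_zero, sub_zero]
  intro i hi
  exact main i hi

end GradedLie
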